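/- Fix n ≥ 1, real numbers 0 = a0 < a1 < ... < a_n, and l0 > 0. For k = 1,...,n and positive reals l1,...,l_n define the 2×2 complex matrices A_k = [[α_{k-1}, α̂_{k-1}],[l_{k-1} α_{k-1}, -l_{k-1} α̂_{k-1}]] and B_k = [[β_k, β̂_k],[l_k β_k, -l_k β̂_k]], where α_k = e^{(1+i)a_{k+1}/l_k}, α̂_k = e^{-(1+i)a_{k+1}/l_k}, β_k = e^{(1+i)a_k/l_k}, β̂_k = e^{-(1+i)a_k/l_k}, and let [[w_n, x_n],[y_n, z_n]] = A_1⁻¹B_1 A_2⁻¹B_2 ⋯ A_n⁻¹B_n. Then there exist positive numbers ε_0, ..., ε_{n-1}, where each ε_k is allowed to depend on a_1,...,a_{k+1} and on l_0,...,l_k, such that whenever the positive reals l_1,...,l_n satisfy |l_{k+1} - l_k|/(l_{k+1} + l_k) ≤ ε_k for every k = 0,...,n-1, one has x_n + z_n ≠ 0. (Formally: there exists a function assigning to each k and each choice of l_0,...,l_k a positive ε_k with this property.) -/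

import Mathlib

open Complex

/-- The transfer matrix `A_k` (for `k = 1, ..., n`), with entries built from
`α_{k-1} = e^{(1+i)a_k/l_{k-1}}` and `α̂_{k-1} = e^{-(1+i)a_k/l_{k-1}}`. -/
noncomputable def transferA (a l : ℕ → ℝ) (k : ℕ) : Matrix (Fin 2) (Fin 2) ℂ :=
  !![Complex.exp ((1 + Complex.I) * a k / l (k - 1)),
      Complex.exp (-(1 + Complex.I) * a k / l (k - 1));
    (l (k - 1) : ℂ) * Complex.exp ((1 + Complex.I) * a k / l (k - 1)),
      -((l (k - 1) : ℂ)) * Complex.exp (-(1 + Complex.I) * a k / l (k - 1))]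

/-- The transfer matrix `B_k` (for `k = 1, ..., n`), with entries built from
`β_k = e^{(1+i)a_k/l_k}` and `β̂_k = e^{-(1+i)a_k/l_k}`. -/
noncomputable def transferB (a l : ℕ → ℝ) (k : ℕ) : Matrix (Fin 2) (Fin 2) ℂ :=
  !![Complex.exp ((1 + Complex.I) * a k / l k),
      Complex.exp (-(1 + Complex.I) * a k / l k);
    (l k : ℂ) * Complex.exp ((1 + Complex.I) * a k / l k),
      -((l k : ℂ)) * Complex.exp (-(1 + Complex.I) * a k / l k)]

/-- The ordered product `A_1⁻¹B_1 A_2⁻¹B_2 ⋯ A_n⁻¹B_n`. -/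
noncomputable def transferProd (a l : ℕ → ℝ) (n : ℕ) : Matrix (Fin 2) (Fin 2) ℂ :=
  ((List.range n).map (fun j => (transferA a l (j + 1))⁻¹ * transferB a l (j + 1))).prod

section Aux

attribute [local instance] Matrix.linftyOpNormedAddCommGroup Matrix.linftyOpNormedRing

/-- The generic transfer-type matrix with exponent parameter `x` and viscosity root `s`. -/
noncomputable def tMat (x s : ℝ) : Matrix (Fin 2) (Fin 2) ℂ :=
  !![Complex.exp ((1 + Complex.I) * x / s), Complex.exp (-(1 + Complex.I) * x / s);
     (s : ℂ) * Complex.exp ((1 + Complex.I) * x / s),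
     -((s : ℂ)) * Complex.exp (-(1 + Complex.I) * x / s)]

lemma tMat_det (x s : ℝ) : (tMat x s).det = -2 * s := by
  have h2 : (-(1 + Complex.I) * (x:ℂ) / s) = -((1 + Complex.I) * x / s) := by ring
  have hw : Complex.exp ((1 + Complex.I) * x / s) *
      Complex.exp (-((1 + Complex.I) * x / s)) = 1 := by
    rw [← Complex.exp_add]; simp
  simp only [tMat, Matrix.det_fin_two_of, h2]
  linear_combination (-2 * (s:ℂ)) * hw

lemma entry_le_norm (M : Matrix (Fin 2) (Fin 2) ℂ) (i j : Fin 2) : ‖M i j‖ ≤ ‖M‖ := by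
  rw [Matrix.linfty_opNorm_def]
  have h1 : ‖M i j‖₊ ≤ ∑ j' : Fin 2, ‖M i j'‖₊ :=
    Finset.single_le_sum (f := fun j' => ‖M i j'‖₊) (fun _ _ => zero_le) (Finset.mem_univ j)
  have h2 : (∑ j' : Fin 2, ‖M i j'‖₊) ≤ (Finset.univ : Finset (Fin 2)).sup
      fun i : Fin 2 => ∑ j' : Fin 2, ‖M i j'‖₊ :=
    Finset.le_sup (f := fun i : Fin 2 => ∑ j' : Fin 2, ‖M i j'‖₊) (Finset.mem_univ i)
  exact_mod_cast h1.trans h2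

lemma tMat_continuousAt (x : ℝ) {s : ℝ} (hs : s ≠ 0) : ContinuousAt (fun t => tMat x t) s := by
  have hsc : (s : ℂ) ≠ 0 := by exact_mod_cast hs
  have hdiv : ContinuousAt (fun t : ℝ => (1 + Complex.I) * x / (t : ℂ)) s :=
    ContinuousAt.div continuousAt_const Complex.continuous_ofReal.continuousAt hsc
  have hdiv' : ContinuousAt (fun t : ℝ => -((1 + Complex.I) * x) / (t : ℂ)) s :=
    ContinuousAt.div continuousAt_const Complex.continuous_ofReal.continuousAt hsc
  have he : ContinuousAt (fun t : ℝ => Complex.exp ((1 + Complex.I) * x / (t : ℂ))) s :=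
    Complex.continuous_exp.continuousAt.comp hdiv
  have he' : ContinuousAt (fun t : ℝ => Complex.exp (-((1 + Complex.I) * x) / (t : ℂ))) s :=
    Complex.continuous_exp.continuousAt.comp hdiv'
  apply continuousAt_pi.2
  intro i
  apply continuousAt_pi.2
  intro j
  fin_cases i <;> fin_cases j <;>
    simp only [tMat, Fin.mk_zero, Fin.mk_one, Matrix.cons_val_zero, Matrix.cons_val_one,
      Matrix.head_cons, Matrix.cons_val', Matrix.empty_val', Matrix.cons_val_fin_one,
      Matrix.head_fin_const, Matrix.of_apply, neg_mul]
  · exact he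
  · exact he'
  · exact (Complex.continuous_ofReal.continuousAt).mul he
  · exact ((Complex.continuous_ofReal.continuousAt).mul he').neg

/-- The key continuity step: if `t` is relatively close to `s`, then `(tMat x s)⁻¹ * tMat x t`
is close to the identity. -/
lemma step (x : ℝ) {s δ : ℝ} (hs : 0 < s) (hδ : 0 < δ) :
    ∃ ε > 0, ∀ t : ℝ, 0 < t → |t - s| / (t + s) ≤ ε →
      ‖(tMat x s)⁻¹ * tMat x t - 1‖ ≤ δ := by
  have hdet : IsUnit (tMat x s).det := by
    rw [tMat_det]
    exact isUnit_iff_ne_zero.2 (by exact_mod_cast mul_ne_zero (by norm_num) hs.ne')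
  have hF1 : (tMat x s)⁻¹ * tMat x s = 1 := Matrix.nonsing_inv_mul _ hdet
  have hcont : ContinuousAt (fun t => (tMat x s)⁻¹ * tMat x t) s := by
    exact (Continuous.matrix_mul continuous_const continuous_id).continuousAt.comp
      (tMat_continuousAt x hs.ne')
  rcases Metric.continuousAt_iff.1 hcont δ hδ with ⟨η, hη, hball⟩
  refine ⟨min (1/2) (η / (8 * s)), by positivity, fun t ht hratio => ?_⟩
  have hts : 0 < t + s := by linarith
  have h1 : |t - s| ≤ min (1/2) (η / (8 * s)) * (t + s) := (div_le_iff₀ hts).1 hratio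
  have hA : |t - s| ≤ (1/2) * (t + s) :=
    h1.trans (mul_le_mul_of_nonneg_right (min_le_left _ _) hts.le)
  have ht3 : t ≤ 3 * s := by
    rcases abs_le.1 hA with ⟨_, h⟩; linarith
  have hB : |t - s| ≤ (η / (8 * s)) * (t + s) :=
    h1.trans (mul_le_mul_of_nonneg_right (min_le_right _ _) hts.le)
  have hdist : dist t s < η := by
    rw [Real.dist_eq]
    have h4 : (η / (8 * s)) * (t + s) ≤ (η / (8 * s)) * (4 * s) := by
      apply mul_le_mul_of_nonneg_left (by linarith) (by positivity)
    have heq : (η / (8 * s)) * (4 * s) = η / 2 := by field_simp; ring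
    calc |t - s| ≤ (η / (8 * s)) * (4 * s) := hB.trans h4
      _ = η / 2 := heq
      _ < η := by linarith
  have hd := hball hdist
  rw [dist_eq_norm, hF1] at hd
  exact hd.le

/-- The `ε` function: for step `k`, apply the continuity lemma at `s = l k`,
with tolerance `(1/2)^(k+3)`. -/
noncomputable def myEps (a : ℕ → ℝ) (k : ℕ) (ls : Fin (k + 1) → ℝ) : ℝ :=
  if h : 0 < ls (Fin.last k) then
    Classical.choose (step (a (k + 1)) h (pow_pos (by norm_num : (0:ℝ) < 1/2) (k + 3)))
  else 1

lemma myEps_pos (a : ℕ → ℝ) (k : ℕ) (ls : Fin (k + 1) → ℝ) : 0 < myEps a k ls := by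
  unfold myEps
  split
  · exact (Classical.choose_spec
      (step (a (k + 1)) ‹_› (pow_pos (by norm_num : (0:ℝ) < 1/2) (k + 3)))).1
  · norm_num

lemma prodBound (a l : ℕ → ℝ) (n : ℕ) (hl : ∀ k ≤ n, 0 < l k)
    (hr : ∀ k < n, |l (k + 1) - l k| / (l (k + 1) + l k) ≤ myEps a k (fun j => l j)) :
    ∀ m ≤ n, ‖transferProd a l m - 1‖ ≤ (1 - (1/2 : ℝ)^m) / 2 := by
  intro m
  induction m with
  | zero => intro _; simp [transferProd]
  | succ m ih =>
    intro hm
    have hm' : m ≤ n := Nat.le_of_succ_le hm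
    have hP := ih hm'
    have hs : 0 < l m := hl m hm'
    have ht : 0 < l (m + 1) := hl (m + 1) hm
    have hspos : 0 < (fun j : Fin (m + 1) => l j) (Fin.last m) := by simpa using hs
    have hrm := hr m (Nat.lt_of_succ_le hm)
    rw [myEps, dif_pos hspos] at hrm
    have hspec := (Classical.choose_spec (step (a (m + 1)) hspos
      (pow_pos (by norm_num : (0:ℝ) < 1/2) (m + 3)))).2
    have hMδ : ‖(tMat (a (m + 1)) ((fun j : Fin (m+1) => l j) (Fin.last m)))⁻¹ *
        tMat (a (m + 1)) (l (m + 1)) - 1‖ ≤ (1/2 : ℝ)^(m + 3) :=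
      hspec (l (m + 1)) ht hrm
    have hAB : transferA a l (m + 1) =
        tMat (a (m + 1)) ((fun j : Fin (m+1) => l j) (Fin.last m)) := by
      simp only [Fin.val_last]
      rfl
    have hBB : transferB a l (m + 1) = tMat (a (m + 1)) (l (m + 1)) := rfl
    set M := (transferA a l (m + 1))⁻¹ * transferB a l (m + 1) with hM
    have hMδ' : ‖M - 1‖ ≤ (1/2 : ℝ)^(m + 3) := by rw [hM, hAB, hBB]; exact hMδ
    have hsplit : transferProd a l (m + 1) = transferProd a l m * M := by
      simp [transferProd, List.range_succ, hM]
    have hdecomp : transferProd a l (m + 1) - 1 = (transferProd a l m - 1) * M + (M - 1) := by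
      rw [hsplit, sub_mul, one_mul]; abel
    have hnM : ‖M‖ ≤ (1/2 : ℝ)^(m + 3) + 1 := by
      calc ‖M‖ = ‖(M - 1) + 1‖ := by congr 1; abel
        _ ≤ ‖M - 1‖ + ‖(1 : Matrix (Fin 2) (Fin 2) ℂ)‖ := norm_add_le _ _
        _ ≤ (1/2 : ℝ)^(m + 3) + 1 := by rw [norm_one]; linarith
    have hq0 : (0:ℝ) ≤ (1/2 : ℝ)^m := by positivity
    have hq1 : (1/2 : ℝ)^m ≤ 1 := pow_le_one₀ (by norm_num) (by norm_num)
    calc ‖transferProd a l (m + 1) - 1‖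
        ≤ ‖(transferProd a l m - 1) * M‖ + ‖M - 1‖ := by rw [hdecomp]; exact norm_add_le _ _
      _ ≤ ‖transferProd a l m - 1‖ * ‖M‖ + ‖M - 1‖ := by
          have := norm_mul_le (transferProd a l m - 1) M; linarith
      _ ≤ ((1 - (1/2 : ℝ)^m) / 2) * ((1/2 : ℝ)^(m + 3) + 1) + (1/2 : ℝ)^(m + 3) := by
          have hnn : (0:ℝ) ≤ ‖M‖ := norm_nonneg _
          have h1 : ‖transferProd a l m - 1‖ * ‖M‖ ≤
              ((1 - (1/2 : ℝ)^m) / 2) * ((1/2 : ℝ)^(m + 3) + 1) :=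
            mul_le_mul hP hnM hnn (by linarith)
          linarith
      _ ≤ (1 - (1/2 : ℝ)^(m + 1)) / 2 := by
          have e1 : (1/2 : ℝ)^(m + 3) = (1/2 : ℝ)^m * (1/8) := by rw [pow_add]; norm_num
          have e2 : (1/2 : ℝ)^(m + 1) = (1/2 : ℝ)^m * (1/2) := by rw [pow_add]; norm_num
          rw [e1, e2]
          nlinarith [hq0, hq1]

end Aux

theorem general_unique_solvability (n : ℕ) (hn : 1 ≤ n) (a : ℕ → ℝ)
    (ha0 : a 0 = 0) (ha : ∀ k < n, a k < a (k + 1)) (l0 : ℝ) (hl0 : 0 < l0) :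
    ∃ ε : (k : ℕ) → (Fin (k + 1) → ℝ) → ℝ,
      (∀ (k : ℕ) (ls : Fin (k + 1) → ℝ), 0 < ε k ls) ∧
      ∀ l : ℕ → ℝ, l 0 = l0 → (∀ k ≤ n, 0 < l k) →
        (∀ k < n, |l (k + 1) - l k| / (l (k + 1) + l k) ≤ ε k (fun j => l j)) →
        transferProd a l n 0 1 + transferProd a l n 1 1 ≠ 0 := by
  refine ⟨myEps a, fun k ls => myEps_pos a k ls, fun l _ hlpos hrat => ?_⟩
  have hb := prodBound a l n hlpos hrat n le_rfl
  intro hzero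
  have h01 : ‖transferProd a l n 0 1‖ ≤ (1 - (1/2 : ℝ)^n) / 2 := by
    have h := entry_le_norm (transferProd a l n - 1) 0 1
    simp only [Matrix.sub_apply, Matrix.one_apply_ne (by decide : (0 : Fin 2) ≠ 1),
      sub_zero] at h
    exact h.trans hb
  have h11 : ‖transferProd a l n 1 1 - 1‖ ≤ (1 - (1/2 : ℝ)^n) / 2 := by
    have h := entry_le_norm (transferProd a l n - 1) 1 1
    simp only [Matrix.sub_apply, Matrix.one_apply_eq] at h
    exact h.trans hb
  have hkey : transferProd a l n 0 1 + (transferProd a l n 1 1 - 1) = -1 := by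
    linear_combination hzero
  have h1 : (1:ℝ) = ‖transferProd a l n 0 1 + (transferProd a l n 1 1 - 1)‖ := by
    rw [hkey]; simp
  have htri := norm_add_le (transferProd a l n 0 1) (transferProd a l n 1 1 - 1)
  have hq : (0:ℝ) < (1/2 : ℝ)^n := by positivity
  linarith
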